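/- For every x ∈ Ω, every 1 ≤ i ≤ r, and every r×r real symmetric matrix y, the directional derivative d/dt|_{t=0} [ Δ*_{i−1}(x+ty)/Δ*_i(x+ty) ] exists and equals ( Δ*_{i−1}(x)/Δ*_i(x) )·tr( [ (P*_{i−1}(x))^{−1} − (P*_i(x))^{−1} ]·y ). -/

import Mathlib

open MeasureTheory Matrix

noncomputable section

instance (r : ℕ) : MeasurableSpace (Matrix (Fin r) (Fin r) ℝ) :=
  inferInstanceAs (MeasurableSpace (Fin r → Fin r → ℝ))

/-- The modified Bessel function of the first kind,
`I(α, z) = ∑_{k=0}^∞ (z/2)^{2k+α}/(k!·Γ(k+α+1))`. -/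
def besselI (α z : ℝ) : ℝ :=
  ∑' k : ℕ, (z / 2) ^ (2 * (k : ℝ) + α) / ((k.factorial : ℝ) * Real.Gamma ((k : ℝ) + α + 1))

/-- Embedding of `Fin k` into `Fin r` as the first `k` indices. -/
def leadEmb (r k : ℕ) (h : k ≤ r) : Fin k → Fin r :=
  fun j => ⟨j.val, lt_of_lt_of_le j.isLt h⟩

/-- Embedding of `Fin k` into `Fin r` as the last `k` indices. -/
def trailEmb (r k : ℕ) (h : k ≤ r) : Fin k → Fin r :=
  fun j => ⟨r - k + j.val, by have := j.isLt; omega⟩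

/-- `Δ_k(x)`: determinant of the leading principal `k × k` submatrix (`Δ_0 = 1`). -/
def Delta (r k : ℕ) (x : Matrix (Fin r) (Fin r) ℝ) : ℝ :=
  if h : k ≤ r then (x.submatrix (leadEmb r k h) (leadEmb r k h)).det else 0

/-- `Δ*_k(x)`: determinant of the trailing principal `k × k` submatrix (`Δ*_0 = 1`). -/
def DeltaStar (r k : ℕ) (x : Matrix (Fin r) (Fin r) ℝ) : ℝ :=
  if h : k ≤ r then (x.submatrix (trailEmb r k h) (trailEmb r k h)).det else 0

/-- The generalized power `Δ_s(x) = Δ_1(x)^{s_1-s_2} ⋯ Δ_{r-1}(x)^{s_{r-1}-s_r} Δ_r(x)^{s_r}`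
(indices of `s` are `0`-based in the formalization). -/
def GenPow (r : ℕ) (s : Fin r → ℝ) (x : Matrix (Fin r) (Fin r) ℝ) : ℝ :=
  ∏ i : Fin r,
    Delta r (i.val + 1) x ^ (s i - if h : i.val + 1 < r then s ⟨i.val + 1, h⟩ else 0)

/-- The general term (indexed by `q ∈ ℕ^r`) of the series defining the mixture density:
`λ^q · Δ_{q+ρ-(n/r,…,n/r)}(x) / (q! · (2π)^{r(r-1)/4} · Γ(q_1)⋯Γ(q_r))`.
Here `ρ = (0, 1/2, …, (r-1)/2)` and `n/r = (r+1)/2`.  Terms with some `q_i = 0` vanish,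
since `Real.Gamma 0 = 0` and division by `0` yields `0` (the convention `1/Γ(0) = 0`). -/
def mixTerm (r : ℕ) (lam : Fin r → ℝ) (x : Matrix (Fin r) (Fin r) ℝ) (q : Fin r → ℕ) : ℝ :=
  (∏ i, lam i ^ q i) *
      GenPow r (fun i => (q i : ℝ) + (i.val : ℝ) / 2 - ((r : ℝ) + 1) / 2) x /
    ((∏ i, ((q i).factorial : ℝ)) * (2 * Real.pi) ^ (((r * (r - 1) : ℕ) : ℝ) / 4) *
      ∏ i, Real.Gamma ((q i : ℝ)))

/-- The mixture density `h(x) = e^{-(λ_1+⋯+λ_r)} e^{-tr x} ∑_{q} mixTerm q`. -/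
def mixDensity (r : ℕ) (lam : Fin r → ℝ) (x : Matrix (Fin r) (Fin r) ℝ) : ℝ :=
  Real.exp (-∑ i, lam i) * Real.exp (-x.trace) * ∑' q : Fin r → ℕ, mixTerm r lam x q

/-- `Ω`: the open cone of symmetric positive definite real `r × r` matrices. -/
def PDCone (r : ℕ) : Set (Matrix (Fin r) (Fin r) ℝ) := {x | x.IsSymm ∧ x.PosDef}

/-- Coordinates on symmetric matrices: the entries `x_{ij}`, `i ≤ j`. -/
abbrev SymIdx (r : ℕ) := {p : Fin r × Fin r // p.1 ≤ p.2}

/-- The symmetric matrix with prescribed entries `x_{ij}`, `i ≤ j`. -/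
def symOfCoords (r : ℕ) (f : SymIdx r → ℝ) : Matrix (Fin r) (Fin r) ℝ :=
  Matrix.of fun i j => if h : i ≤ j then f ⟨(i, j), h⟩ else f ⟨(j, i), (le_total i j).resolve_left h⟩

/-- The Lebesgue measure on the space of symmetric `r × r` matrices, normalized so that it is
the Euclidean measure associated with the trace inner product `⟨x,y⟩ = tr(xy)`
(an orthonormal basis is `{c_ii} ∪ {(e_ij+e_ji)/√2 : i<j}`, whence the factor `√2^{r(r-1)/2}`
relative to the coordinates `x_{ij}`, `i ≤ j`). -/
def lebSym (r : ℕ) : Measure (Matrix (Fin r) (Fin r) ℝ) :=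
  ENNReal.ofReal (Real.sqrt 2 ^ (r * (r - 1) / 2)) • Measure.map (symOfCoords r) volume

/-- The Laplace transform `L_μ(θ) = ∫_Ω e^{tr(θx)} h(x) dx` of the mixture. -/
def mixLaplace (r : ℕ) (lam : Fin r → ℝ) (θ : Matrix (Fin r) (Fin r) ℝ) : ℝ :=
  ∫ x in PDCone r, Real.exp ((θ * x).trace) * mixDensity r lam x ∂lebSym r

/-- `P_θ`: the probability measure on `Ω` with Lebesgue density
`e^{tr(θx)} h(x) / L_μ(θ)`. -/
def mixNEF (r : ℕ) (lam : Fin r → ℝ) (θ : Matrix (Fin r) (Fin r) ℝ) :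
    Measure (Matrix (Fin r) (Fin r) ℝ) :=
  ((lebSym r).restrict (PDCone r)).withDensity fun x =>
    ENNReal.ofReal (Real.exp ((θ * x).trace) * mixDensity r lam x / mixLaplace r lam θ)

/-- The mean `m(θ) = ∫_Ω x dP_θ(x)` (computed entrywise). -/
def mixMean (r : ℕ) (lam : Fin r → ℝ) (θ : Matrix (Fin r) (Fin r) ℝ) :
    Matrix (Fin r) (Fin r) ℝ :=
  Matrix.of fun i j => ∫ x, x i j ∂mixNEF r lam θ

/-- `(P*_k(x))⁻¹`: the `r × r` symmetric matrix whose trailing `k × k` block is the inverse of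
the trailing principal `k × k` submatrix of `x`, all other entries being `0`
(`(P*_0(x))⁻¹ = 0`). -/
def PstarInv (r k : ℕ) (x : Matrix (Fin r) (Fin r) ℝ) : Matrix (Fin r) (Fin r) ℝ :=
  if h : k ≤ r then
    Matrix.of fun i j =>
      if hij : r - k ≤ i.val ∧ r - k ≤ j.val then
        (x.submatrix (trailEmb r k h) (trailEmb r k h))⁻¹
          ⟨i.val - (r - k), by have := i.isLt; omega⟩
          ⟨j.val - (r - k), by have := j.isLt; omega⟩
      else 0
  else 0

/-- `b_i(m) = (i-1)/4 + √(((i-1)/4)² + λ_i Δ_i(m)/Δ_{i-1}(m))` (`i : Fin r` is `0`-based,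
so `(i-1)` in the `1`-based notation reads `i.val` here). -/
def bFun (r : ℕ) (lam : Fin r → ℝ) (i : Fin r) (m : Matrix (Fin r) (Fin r) ℝ) : ℝ :=
  (i.val : ℝ) / 4 +
    Real.sqrt (((i.val : ℝ) / 4) ^ 2 + lam i * (Delta r (i.val + 1) m / Delta r i.val m))

section Helpers
open Polynomial

lemma posdef_submatrix {m n : Type*} [Fintype m] [Fintype n]
    {M : Matrix n n ℝ} (hM : M.PosDef) (e : m → n) (he : Function.Injective e) :
    (M.submatrix e e).PosDef := by
  classical
  refine Matrix.PosDef.of_dotProduct_mulVec_pos (hM.1.submatrix e) fun v hv => ?_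
  set w : n → ℝ := fun j => ∑ a, if e a = j then v a else 0 with hw
  have hwe : ∀ a, w (e a) = v a := by
    intro a
    simp [hw, he.eq_iff, Finset.sum_ite_eq']
  have hsum : ∀ f : n → ℝ, ∑ j, w j * f j = ∑ a, v a * f (e a) := by
    intro f
    simp only [hw, Finset.sum_mul, ite_mul, zero_mul]
    rw [Finset.sum_comm]
    simp [Finset.sum_ite_eq]
  have hw0 : w ≠ 0 := by
    intro h
    apply hv
    funext a
    have := congrFun h (e a)
    simpa [hwe a] using this
  have key : dotProduct (star v) (M.submatrix e e *ᵥ v) = dotProduct (star w) (M *ᵥ w) := by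
    simp only [star_trivial, dotProduct, Matrix.mulVec, Matrix.submatrix_apply]
    rw [hsum fun j => ∑ l, M j l * w l]
    refine Finset.sum_congr rfl fun a _ => ?_
    congr 1
    rw [show (∑ l, M (e a) l * w l) = ∑ l, w l * M (e a) l by
        exact Finset.sum_congr rfl fun l _ => mul_comm _ _,
      hsum fun l => M (e a) l]
    exact Finset.sum_congr rfl fun b _ => mul_comm _ _
  rw [key]
  exact hM.dotProduct_mulVec_pos hw0

lemma hasDerivAt_det_add_smul {n : Type*} [Fintype n] [DecidableEq n]
    (A B : Matrix n n ℝ) (hA : IsUnit A.det) :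
    HasDerivAt (fun t : ℝ => (A + t • B).det) (A.det * (A⁻¹ * B).trace) 0 := by
  set P : ℝ[X] := (Matrix.det (1 + (X : ℝ[X]) • (A⁻¹ * B).map C)).divX.divX with hP
  have key : ∀ t : ℝ, (A + t • B).det =
      A.det * (1 + (A⁻¹ * B).trace * t + P.eval t * t ^ 2) := by
    intro t
    have h1 : A + t • B = A * (1 + t • (A⁻¹ * B)) := by
      rw [mul_add, mul_one, Matrix.mul_smul, ← Matrix.mul_assoc,
        Matrix.mul_nonsing_inv A hA, Matrix.one_mul]
    rw [h1, Matrix.det_mul, Matrix.det_one_add_smul]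
  have h2 : HasDerivAt (fun t : ℝ =>
      A.det * (1 + (A⁻¹ * B).trace * t + P.eval t * t ^ 2))
      (A.det * (A⁻¹ * B).trace) 0 := by
    have hp : HasDerivAt (fun t : ℝ => P.eval t * t ^ 2)
        (P.derivative.eval 0 * 0 ^ 2 + P.eval 0 * (2 * 0 ^ 1)) 0 :=
      (P.hasDerivAt 0).mul (hasDerivAt_pow 2 0)
    have h3 : HasDerivAt (fun t : ℝ => 1 + (A⁻¹ * B).trace * t + P.eval t * t ^ 2)
        ((A⁻¹ * B).trace) 0 := by
      have := ((hasDerivAt_const (0:ℝ) (1:ℝ)).add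
        ((hasDerivAt_id (0:ℝ)).const_mul ((A⁻¹ * B).trace))).add hp
      exact this.congr_deriv (by simp)
    simpa using h3.const_mul A.det
  simpa only [← key] using h2

lemma sum_trail {r k : ℕ} (h : k ≤ r) (g : Fin r → ℝ)
    (hg : ∀ j : Fin r, j.val < r - k → g j = 0) :
    ∑ j, g j = ∑ a : Fin k, g (trailEmb r k h a) := by
  have hrk : r - k + k = r := Nat.sub_add_cancel h
  rw [← (finCongr hrk).sum_comp g, ← finSumFinEquiv.sum_comp, Fintype.sum_sum_type]
  have h1 : ∀ j : Fin (r - k), g (finCongr hrk (finSumFinEquiv (Sum.inl j))) = 0 := by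
    intro j
    apply hg
    simp [finSumFinEquiv]
  simp only [h1, Finset.sum_const_zero, zero_add]
  exact Finset.sum_congr rfl fun a _ => rfl

lemma trace_PstarInv_mul (r k : ℕ) (h : k ≤ r) (x y : Matrix (Fin r) (Fin r) ℝ) :
    (PstarInv r k x * y).trace =
      ((x.submatrix (trailEmb r k h) (trailEmb r k h))⁻¹ *
        (y.submatrix (trailEmb r k h) (trailEmb r k h))).trace := by
  classical
  simp only [Matrix.trace, Matrix.diag_apply, Matrix.mul_apply, PstarInv, dif_pos h,
    Matrix.of_apply, Matrix.submatrix_apply]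
  have key : ∀ (c : Fin k) (p : (trailEmb r k h c).val - (r - k) < k),
      (⟨(trailEmb r k h c).val - (r - k), p⟩ : Fin k) = c := by
    intro c p; ext; simp only [trailEmb]; omega
  rw [sum_trail h _ (fun j hj => ?_)]
  · refine Finset.sum_congr rfl fun a _ => ?_
    rw [sum_trail h _ (fun l hl => ?_)]
    · refine Finset.sum_congr rfl fun b _ => ?_
      have hc : r - k ≤ (trailEmb r k h a).val ∧ r - k ≤ (trailEmb r k h b).val := by
        constructor <;> simp [trailEmb]
      rw [dif_pos hc]
      simp only [key]
    · rw [dif_neg (by simp [trailEmb]; omega), zero_mul]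
  · refine Finset.sum_eq_zero fun l _ => ?_
    rw [dif_neg (by omega), zero_mul]

end Helpers

/-- For `x ∈ Ω`, `1 ≤ i ≤ r` and symmetric `y`, the directional derivative of
`x ↦ Δ*_{i-1}(x)/Δ*_i(x)` in the direction `y` exists and equals
`(Δ*_{i-1}(x)/Δ*_i(x)) · tr([(P*_{i-1}(x))⁻¹ - (P*_i(x))⁻¹] y)`. -/
theorem stmt12 (r : ℕ) (hr : 1 ≤ r) (x : Matrix (Fin r) (Fin r) ℝ) (hx : x ∈ PDCone r)
    (i : Fin r) (y : Matrix (Fin r) (Fin r) ℝ) (hy : y.IsSymm) :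
    HasDerivAt
      (fun t : ℝ => DeltaStar r i.val (x + t • y) / DeltaStar r (i.val + 1) (x + t • y))
      (DeltaStar r i.val x / DeltaStar r (i.val + 1) x *
        ((PstarInv r i.val x - PstarInv r (i.val + 1) x) * y).trace) 0 := by
  classical
  obtain ⟨hxs, hxp⟩ := hx
  have hk1 : i.val ≤ r := le_of_lt i.isLt
  have hk2 : i.val + 1 ≤ r := i.isLt
  set e1 := trailEmb r i.val hk1 with he1def
  set e2 := trailEmb r (i.val + 1) hk2 with he2def
  have he1 : Function.Injective e1 := by
    intro a b hab
    have := congrArg Fin.val hab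
    simp only [he1def, trailEmb] at this
    exact Fin.ext (by omega)
  have he2 : Function.Injective e2 := by
    intro a b hab
    have := congrArg Fin.val hab
    simp only [he2def, trailEmb] at this
    exact Fin.ext (by omega)
  set A1 := x.submatrix e1 e1 with hA1def
  set B1 := y.submatrix e1 e1 with hB1def
  set A2 := x.submatrix e2 e2 with hA2def
  set B2 := y.submatrix e2 e2 with hB2def
  have hA1 : A1.PosDef := posdef_submatrix hxp e1 he1
  have hA2 : A2.PosDef := posdef_submatrix hxp e2 he2
  have hd1 : (0:ℝ) < A1.det := hA1.det_pos
  have hd2 : (0:ℝ) < A2.det := hA2.det_pos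
  have hfun1 : ∀ t : ℝ, DeltaStar r i.val (x + t • y) = (A1 + t • B1).det := by
    intro t
    rw [DeltaStar, dif_pos hk1]
    congr 1
  have hfun2 : ∀ t : ℝ, DeltaStar r (i.val + 1) (x + t • y) = (A2 + t • B2).det := by
    intro t
    rw [DeltaStar, dif_pos hk2]
    congr 1
  have h1 : HasDerivAt (fun t : ℝ => DeltaStar r i.val (x + t • y))
      (A1.det * (A1⁻¹ * B1).trace) 0 := by
    simp only [hfun1]
    exact hasDerivAt_det_add_smul A1 B1 hd1.ne'.isUnit
  have h2 : HasDerivAt (fun t : ℝ => DeltaStar r (i.val + 1) (x + t • y))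
      (A2.det * (A2⁻¹ * B2).trace) 0 := by
    simp only [hfun2]
    exact hasDerivAt_det_add_smul A2 B2 hd2.ne'.isUnit
  have hD1 : DeltaStar r i.val (x + (0:ℝ) • y) = A1.det := by
    simpa using hfun1 0
  have hD2 : DeltaStar r (i.val + 1) (x + (0:ℝ) • y) = A2.det := by
    simpa using hfun2 0
  have H := h1.div h2 (by rw [hD2]; exact hd2.ne')
  convert H using 1
  · rfl
  · rfl
  · rfl
  rw [hD1, hD2]
  have hDx1 : DeltaStar r i.val x = A1.det := by
    have := hfun1 0; simpa using this
  have hDx2 : DeltaStar r (i.val + 1) x = A2.det := by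
    have := hfun2 0; simpa using this
  rw [hDx1, hDx2, Matrix.sub_mul, Matrix.trace_sub,
    trace_PstarInv_mul r i.val hk1 x y, trace_PstarInv_mul r (i.val + 1) hk2 x y]
  rw [← he1def, ← he2def, ← hA1def, ← hB1def, ← hA2def, ← hB2def]
  field_simp
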